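/- Let (x,y) be an edge of a simple graph G dominated by a vertex w (i.e., N[x] ∩ N[y] ⊆ N[w], w ∉ {x,y}), and let G' = G − (x,y) be the graph with this edge removed. Then for any vertices u, v, the distance between u and v in G' is at most the distance in G plus 1. -/
import Mathlib


/-- Closed neighborhood of a vertex. -/
def closedNbhd {V : Type*} (G : SimpleGraph V) (u : V) : Set V :=
  insert u (G.neighborSet u)

private lemma walk_aux {V : Type*} (G : SimpleGraph V) (x y w : V)
    (hwx : G.Adj w x) (hwy : G.Adj w y)
    {u v : V} (p : G.Walk u v) (hp : p.IsPath) :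
    ∃ q : (G.deleteEdges {s(x, y)}).Walk u v, q.length ≤ p.length + 1 := by
  induction p with
  | nil => exact ⟨.nil, by simp⟩
  | @cons a b c h p' ih =>
    have hp' : p'.IsPath := hp.of_cons
    by_cases he : s(a, b) = s(x, y)
    · have hne : s(x, y) ∉ p'.edges := by
        have := hp.edges_nodup
        rw [SimpleGraph.Walk.edges_cons] at this
        rw [← he]; exact this.notMem
      have hmem : ∀ e ∈ p'.edges, e ∉ ({s(x, y)} : Set (Sym2 V)) := fun e hmem => by
        simp only [Set.mem_singleton_iff]; rintro rfl; exact hne hmem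
      let p'' := p'.toDeleteEdges {s(x, y)} hmem
      have hlen : p''.length = p'.length := p'.length_transfer _
      have hwa : G.Adj w a := by
        rcases Sym2.eq_iff.mp he with ⟨ha, _⟩ | ⟨ha, _⟩
        · exact ha ▸ hwx
        · exact ha ▸ hwy
      have hwb : G.Adj w b := by
        rcases Sym2.eq_iff.mp he with ⟨_, hb⟩ | ⟨_, hb⟩
        · exact hb ▸ hwy
        · exact hb ▸ hwx
      have h1 : (G.deleteEdges {s(x, y)}).Adj a w := by
        rw [SimpleGraph.deleteEdges_adj]
        refine ⟨hwa.symm, ?_⟩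
        simp only [Set.mem_singleton_iff, Sym2.eq_iff]
        push_neg
        exact ⟨fun _ => hwy.ne, fun _ => hwx.ne⟩
      have h2 : (G.deleteEdges {s(x, y)}).Adj w b := by
        rw [SimpleGraph.deleteEdges_adj]
        refine ⟨hwb, ?_⟩
        simp only [Set.mem_singleton_iff, Sym2.eq_iff]
        push_neg
        exact ⟨fun hw => absurd hw hwx.ne, fun hw => absurd hw hwy.ne⟩
      refine ⟨.cons h1 (.cons h2 p''), ?_⟩
      simp [hlen]
    · obtain ⟨q', hq'⟩ := ih hp'
      have h1 : (G.deleteEdges {s(x, y)}).Adj a b := by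
        rw [SimpleGraph.deleteEdges_adj]
        exact ⟨h, by simpa using he⟩
      exact ⟨.cons h1 q', by simpa using Nat.succ_le_succ hq'⟩

/-- Deleting an edge dominated by a vertex `w` increases any shortest-path
distance by at most 1. -/
theorem stmt_3 {V : Type*} [Fintype V] (G : SimpleGraph V) (x y w : V)
    (hxy : G.Adj x y) (hwx : w ≠ x) (hwy : w ≠ y)
    (hdom : closedNbhd G x ∩ closedNbhd G y ⊆ closedNbhd G w)
    (u v : V) :
    (G.deleteEdges {s(x, y)}).edist u v ≤ G.edist u v + 1 := by
  classical
  by_cases htop : G.edist u v = ⊤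
  · rw [htop]; exact le_top
  have hGwx : G.Adj w x := by
    have hx : x ∈ closedNbhd G w :=
      hdom ⟨Set.mem_insert _ _, Set.mem_insert_iff.mpr (Or.inr hxy.symm)⟩
    rcases Set.mem_insert_iff.mp hx with h | h
    · exact absurd h.symm hwx
    · exact h
  have hGwy : G.Adj w y := by
    have hy : y ∈ closedNbhd G w :=
      hdom ⟨Set.mem_insert_iff.mpr (Or.inr hxy), Set.mem_insert _ _⟩
    rcases Set.mem_insert_iff.mp hy with h | h
    · exact absurd h.symm hwy
    · exact h
  obtain ⟨p, hp⟩ := G.exists_walk_of_edist_ne_top htop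
  obtain ⟨q, hq⟩ := walk_aux G x y w hGwx hGwy p.bypass p.bypass_isPath
  calc (G.deleteEdges {s(x, y)}).edist u v ≤ q.length := SimpleGraph.edist_le q
    _ ≤ (p.bypass.length + 1 : ℕ) := by exact_mod_cast hq
    _ ≤ (p.length + 1 : ℕ) := by exact_mod_cast Nat.succ_le_succ p.length_bypass_le
    _ = G.edist u v + 1 := by rw [Nat.cast_add, hp, Nat.cast_one]
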